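/- May-testing compliance is not in general a post-compliance relation: there exist a type U, a set of visible actions with dual involution, a transition relation, and a distinguished state 0 satisfying the standing assumptions, together with contracts p, q ∈ U, such that p ⊣may q but (p,q) ∉ F(⊣may). (A witness: p with transitions !a to 0 and !b to a state that can only perform ?c, and q with transitions ?a to 0 and ?b to 0.) -/

import Mathlib

/-- A labelled transition system of contracts: states `U`, visible actions `Act`
partitioned into outputs (`isOut`) and inputs, with a dual involution swapping
inputs and outputs; transitions carry `Option Act` labels (`none` is the
internal action τ); `zero` is the unique state with no outgoing transitions. -/
structure CLTS where
  U : Type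
  Act : Type
  isOut : Act → Prop
  dual : Act → Act
  dual_dual : ∀ a, dual (dual a) = a
  dual_flip : ∀ a, isOut (dual a) ↔ ¬ isOut a
  tr : U → Option Act → U → Prop
  zero : U
  zero_no_trans : ∀ l p', ¬ tr zero l p'
  no_trans_eq_zero : ∀ p, (∀ l p', ¬ tr p l p') → p = zero

namespace CLTS

variable (M : CLTS)

/-- One-step τ-reduction of a client/server pair (τ-transition of `p | q`). -/
def Step (c c' : M.U × M.U) : Prop :=
  (M.tr c.1 none c'.1 ∧ c'.2 = c.2) ∨
  (c'.1 = c.1 ∧ M.tr c.2 none c'.2) ∨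
  (∃ a, M.tr c.1 (some a) c'.1 ∧ M.tr c.2 (some (M.dual a)) c'.2)

/-- A pair is stuck if it has no one-step τ-reduction. -/
def Stuck (c : M.U × M.U) : Prop := ∀ c', ¬ M.Step c c'

/-- Reflexive-transitive closure of one-step τ-reduction. -/
def Steps : M.U × M.U → M.U × M.U → Prop := Relation.ReflTransGen M.Step

/-- Successful pairs: the client has terminated. -/
def Succ : Set (M.U × M.U) := {c | c.1 = M.zero}

/-- The compliance functional. -/
def F (x : Set (M.U × M.U)) : Set (M.U × M.U) :=
  M.Succ ∪ {c | ¬ M.Stuck c ∧ ∀ c', M.Step c c' → c' ∈ x}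

/-- Progress compliance. -/
def Pg (p q : M.U) : Prop :=
  ∀ p' q', M.Steps (p, q) (p', q') → M.Stuck (p', q') → p' = M.zero

/-- Progress compliance, as a set of pairs. -/
def pgRel : Set (M.U × M.U) := {c | M.Pg c.1 c.2}

/-- Must-testing compliance: every maximal τ-trace (encoded as a sequence which,
once stuck, stays put) reaches a successful pair. -/
def Mst (p q : M.U) : Prop :=
  ∀ s : ℕ → M.U × M.U, s 0 = (p, q) →
    (∀ n, M.Step (s n) (s (n + 1)) ∨ (M.Stuck (s n) ∧ s (n + 1) = s n)) →
    ∃ i, (s i).1 = M.zero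

/-- Must-testing compliance, as a set of pairs. -/
def mstRel : Set (M.U × M.U) := {c | M.Mst c.1 c.2}

/-- Should-testing compliance. -/
def Shd (p q : M.U) : Prop :=
  ∀ p' q', M.Steps (p, q) (p', q') → ∃ q'', M.Steps (p', q') (M.zero, q'')

/-- Should-testing compliance, as a set of pairs. -/
def shdRel : Set (M.U × M.U) := {c | M.Shd c.1 c.2}

/-- τ-transition on single states. -/
def TauStep (r r' : M.U) : Prop := M.tr r none r'

/-- Reflexive-transitive closure of τ-transitions on single states. -/
def TauSteps : M.U → M.U → Prop := Relation.ReflTransGen M.TauStep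

/-- `r` may diverge: it has an infinite internal computation. -/
def Diverges (r : M.U) : Prop :=
  ∃ s : ℕ → M.U, s 0 = r ∧ ∀ n, M.TauStep (s n) (s (n + 1))

/-- Behavioural compliance. -/
def Beh (p q : M.U) : Prop :=
  ∀ p' q', M.Steps (p, q) (p', q') →
    (M.Stuck (p', q') → p' = M.zero) ∧ (M.Diverges q' → M.TauSteps p' M.zero)

/-- Behavioural compliance, as a set of pairs. -/
def behRel : Set (M.U × M.U) := {c | M.Beh c.1 c.2}

/-- Weak barb on a visible action. -/
def WBarb (p : M.U) (a : M.Act) : Prop :=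
  ∃ p₁ p₂, M.TauSteps p p₁ ∧ M.tr p₁ (some a) p₂

/-- I/O compliance. -/
def Io (p q : M.U) : Prop :=
  ∀ p' q', M.Steps (p, q) (p', q') →
    (∀ a, M.isOut a → M.WBarb p' a → M.WBarb q' (M.dual a)) ∧
    (((¬ ∃ a, M.isOut a ∧ M.WBarb p' a) ∧ (∃ a, ¬ M.isOut a ∧ M.WBarb p' a)) →
      ((∃ a, M.isOut a ∧ M.WBarb q' a) ∧
       ∀ a, M.isOut a → M.WBarb q' a → M.WBarb p' (M.dual a)))

/-- I/O compliance, as a set of pairs. -/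
def ioRel : Set (M.U × M.U) := {c | M.Io c.1 c.2}

/-- May-testing compliance. -/
def May (p q : M.U) : Prop := ∃ q', M.Steps (p, q) (M.zero, q')

/-- May-testing compliance, as a set of pairs. -/
def mayRel : Set (M.U × M.U) := {c | M.May c.1 c.2}

end CLTS

/-- may-testing compliance is not in general a post-compliance relation. -/

def myTr : Fin 4 → Option (Bool × Fin 3) → Fin 4 → Bool
  | 1, some (true, 0), 0 => true
  | 1, some (true, 1), 3 => true
  | 2, some (false, 0), 0 => true
  | 2, some (false, 1), 0 => true
  | 3, some (false, 2), 0 => true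
  | _, _, _ => false

def myM : CLTS where
  U := Fin 4
  Act := Bool × Fin 3
  isOut a := a.1 = true
  dual a := (!a.1, a.2)
  dual_dual := by decide
  dual_flip := by decide
  tr x l y := myTr x l y = true
  zero := 0
  zero_no_trans := by decide
  no_trans_eq_zero := by decide

lemma myTr0 : ∀ l y, myTr 0 l y = false := by decide
lemma myTr3none : ∀ y, myTr 3 none y = false := by decide
lemma myTr3some : ∀ a y, myTr 3 (some a) y = true → a = (false, 2) ∧ y = 0 := by decide

lemma stuck30 : myM.Stuck ((3 : Fin 4), (0 : Fin 4)) := by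
  rintro c' (⟨h, _⟩ | ⟨_, h⟩ | ⟨a, h1, h2⟩)
  · exact absurd h (by simp [myM, myTr3none])
  · exact absurd h (by simp [myM, myTr0])
  · exact absurd h2 (by simp [myM, myTr0])

lemma steps30 : ∀ c', myM.Steps ((3 : Fin 4), (0 : Fin 4)) c' →
    c' = ((3 : Fin 4), (0 : Fin 4)) := by
  intro c' h
  induction h with
  | refl => rfl
  | tail h1 h2 ih =>
      subst ih
      exact absurd h2 (stuck30 _)

theorem may_not_post_compliance :
    ∃ (M : CLTS) (p q : M.U), M.May p q ∧ (p, q) ∉ M.F M.mayRel := by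
  refine ⟨myM, (1 : Fin 4), (2 : Fin 4), ⟨(0 : Fin 4), Relation.ReflTransGen.single ?_⟩, ?_⟩
  · exact Or.inr (Or.inr ⟨(true, 0), rfl, rfl⟩)
  · rintro (h | ⟨-, hall⟩)
    · exact (by decide : ¬ (1 : Fin 4) = 0) h
    · have hstep : myM.Step ((1 : Fin 4), (2 : Fin 4)) ((3 : Fin 4), (0 : Fin 4)) :=
        Or.inr (Or.inr ⟨(true, 1), rfl, rfl⟩)
      obtain ⟨q', hs⟩ := hall _ hstep
      have := steps30 _ hs
      simp [myM, Prod.ext_iff] at this
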